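/- For all integers 1 ≤ k ≤ n, the signed Stirling numbers of the first kind admit the explicit nested-sum representation s(n,k) = (−1)^{n+k} (n−1)! · Σ_{ℓ1=1}^{n−1} (1/ℓ1) Σ_{ℓ2=1}^{ℓ1−1} (1/ℓ2) ⋯ Σ_{ℓ_{k−2}=1}^{ℓ_{k−3}−1} (1/ℓ_{k−2}) Σ_{ℓ_{k−1}=1}^{ℓ_{k−2}−1} (1/ℓ_{k−1}), where the sum is a (k−1)-fold nested sum (interpreted as 1 when k = 1, i.e. the empty nested sum equals 1). -/

import Mathlib

/-- Signed Stirling numbers of the first kind, defined by `s(0,0)=1`,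
`s(n,0)=0` for `n ≥ 1`, `s(0,k)=0` for `k ≥ 1`, and
`s(n+1,k+1) = s(n,k) - n·s(n,k+1)`. -/
def stirling1 : ℕ → ℕ → ℤ
  | 0, 0 => 1
  | 0, _ + 1 => 0
  | _ + 1, 0 => 0
  | n + 1, k + 1 => stirling1 n k - (n : ℤ) * stirling1 n (k + 1)

/-- `nestedSum j m` is the `j`-fold nested sum
`Σ_{ℓ1=1}^{m} (1/ℓ1) Σ_{ℓ2=1}^{ℓ1-1} (1/ℓ2) ⋯ Σ_{ℓj=1}^{ℓ_{j-1}-1} (1/ℓj)`,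
with the empty (`j = 0`) nested sum equal to `1`. -/
noncomputable def nestedSum : ℕ → ℕ → ℝ
  | 0, _ => 1
  | j + 1, m => ∑ l ∈ Finset.Icc 1 m, (1 / (l : ℝ)) * nestedSum j (l - 1)
termination_by j _ => j

/-- The quantity `a_{n,k} = (k-1)!(n-1)!` times the `(k-2)`-fold nested sum
`Σ_{ℓ1=1}^{n-1} (1/ℓ1) ⋯ Σ_{ℓ_{k-2}=1}^{ℓ_{k-3}-1} (1/ℓ_{k-2})`; in particular
`a_{n,2} = (n-1)!`. -/
noncomputable def a (n k : ℕ) : ℝ :=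
  (Nat.factorial (k - 1) : ℝ) * (Nat.factorial (n - 1) : ℝ) * nestedSum (k - 2) (n - 1)

lemma nestedSum_eq_zero : ∀ j m : ℕ, m < j → nestedSum j m = 0
  | 0, m, h => by omega
  | j + 1, m, h => by
    rw [nestedSum]
    apply Finset.sum_eq_zero
    intro l hl
    simp only [Finset.mem_Icc] at hl
    rw [nestedSum_eq_zero j (l - 1) (by omega)]
    ring

lemma stirling1_eq_zero : ∀ n k : ℕ, n < k → stirling1 n k = 0
  | 0, k + 1, h => rfl
  | n + 1, k + 1, h => by
    rw [stirling1, stirling1_eq_zero n k (by omega),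
      stirling1_eq_zero n (k + 1) (by omega)]
    ring

lemma nestedSum_succ_succ (j m : ℕ) :
    nestedSum (j + 1) (m + 1) = nestedSum (j + 1) m + (1 / (m + 1 : ℝ)) * nestedSum j m := by
  rw [nestedSum, nestedSum, Finset.sum_Icc_succ_top (by omega)]
  simp

lemma key : ∀ n, 1 ≤ n → ∀ k, 1 ≤ k →
    (stirling1 n k : ℝ) =
      (-1 : ℝ) ^ (n + k) * (Nat.factorial (n - 1) : ℝ) * nestedSum (k - 1) (n - 1) := by
  intro n
  induction n with
  | zero => omega
  | succ m ih =>
    intro _ k hk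
    rcases Nat.eq_zero_or_pos m with rfl | hm
    · -- n = 1
      rcases Nat.lt_or_ge 1 k with h | h
      · rw [stirling1_eq_zero 1 k h, nestedSum_eq_zero (k-1) (0+1-1) (by omega)]
        push_cast; ring
      · interval_cases k
        simp [stirling1, nestedSum, Nat.factorial]
    · -- m ≥ 1
      obtain ⟨p, rfl⟩ : ∃ p, m = p + 1 := ⟨m - 1, by omega⟩
      rcases Nat.lt_or_ge (p + 2) k with h | h
      · rw [stirling1_eq_zero _ k h, nestedSum_eq_zero (k-1) (p+1+1-1) (by omega)]
        push_cast; ring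
      rcases k with _ | _ | j
      · omega
      · -- k = 1
        rw [show stirling1 (p + 2) 1 = stirling1 (p+1) 0 - ((p+1 : ℕ) : ℤ) * stirling1 (p+1) 1 from rfl]
        rw [show stirling1 (p + 1) 0 = 0 from rfl]
        have h1 := ih (by omega) 1 (by omega)
        rw [show (1:ℕ) - 1 = 0 by omega, show p + 1 - 1 = p by omega] at h1
        push_cast [h1]
        rw [show Nat.factorial (p+1) = (p+1) * Nat.factorial p from rfl]
        simp only [nestedSum]
        push_cast
        simp only [pow_add, pow_succ, pow_zero]
        ring
      · -- k = j + 2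
        rw [show stirling1 (p + 2) (j + 2) = stirling1 (p+1) (j+1) - ((p+1 : ℕ) : ℤ) * stirling1 (p+1) (j+2) from rfl]
        have h1 := ih (by omega) (j + 1) (by omega)
        have h2 := ih (by omega) (j + 2) (by omega)
        rw [show j + 1 - 1 = j by omega, show p + 1 - 1 = p by omega] at h1
        rw [show j + 2 - 1 = j + 1 by omega, show p + 1 - 1 = p by omega] at h2
        push_cast [h1, h2]
        rw [nestedSum_succ_succ j p,
          show Nat.factorial (p+1) = (p+1) * Nat.factorial p from rfl]
        push_cast
        simp only [pow_add, pow_succ, pow_zero]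
        have hp : ((p : ℝ) + 1) ≠ 0 := by positivity
        field_simp
        ring

/-- For `1 ≤ k ≤ n`, the signed Stirling numbers of the first kind admit the
explicit `(k-1)`-fold nested-sum representation
`s(n,k) = (-1)^{n+k} (n-1)! Σ_{ℓ1=1}^{n-1} (1/ℓ1) ⋯ Σ_{ℓ_{k-1}=1}^{ℓ_{k-2}-1} (1/ℓ_{k-1})`. -/
theorem stirling1_eq_nestedSum (n k : ℕ) (hk : 1 ≤ k) (hkn : k ≤ n) :
    (stirling1 n k : ℝ) =
      (-1 : ℝ) ^ (n + k) * (Nat.factorial (n - 1) : ℝ) * nestedSum (k - 1) (n - 1) := by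
  exact key n (le_trans hk hkn) k hk
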